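/- Suppose the coefficients (p_{k,n}) satisfy the recursion p_{k,n} = Σ_{j=1}^{k−1} Σ_{ℓ=0}^{n} G_{k−j,j} p_{k−j,ℓ} p_{j,n−ℓ} + 2Σ_{j=1}^{n} Σ_{ℓ=0}^{n−j} G_{k+j,−j} p_{k+j,ℓ} p_{j,n−(j+ℓ)} for all k ≥ 1 and n ≥ 0, and that p_{2,n} = γ₂ δ_{n,0}. Then necessarily p_{1,0} = 0 and p_{1,1} = 0; that is, the recursion at k = 1 is inconsistent with the representation p_{1,n} = δ_{n,0}, and the first possibly non-vanishing coefficient for a₁ is p_{1,2} = 2G_{3,−2} p_{3,0} p_{2,0}. -/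
import Mathlib

open Real

/-- Maxwellian kernel transform: `Γ(u) = sin(πu)/(πu)` for `u ≠ 0`, `Γ(0) = 1`. -/
noncomputable def Gam (u : ℝ) : ℝ :=
  if u = 0 then 1 else Real.sin (π * u) / (π * u)

/-- `G_{i,j} = γ_{i+j} Γ((i-j)/2) / (1 - 2γ_{i+j}Γ((i+j)/2))`. -/
noncomputable def Gc (γ : ℤ → ℝ) (i j : ℤ) : ℝ :=
  γ (i + j) * Gam (((i : ℝ) - (j : ℝ)) / 2) / (1 - 2 * γ (i + j) * Gam (((i : ℝ) + (j : ℝ)) / 2))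

/-- If the coefficients `(p_{k,n})` satisfy the recursion
`p_{k,n} = Σ_{j=1}^{k-1}Σ_{ℓ=0}^{n} G_{k-j,j} p_{k-j,ℓ} p_{j,n-ℓ}
  + 2Σ_{j=1}^{n}Σ_{ℓ=0}^{n-j} G_{k+j,-j} p_{k+j,ℓ} p_{j,n-(j+ℓ)}` for all `k ≥ 1`, `n ≥ 0`,
and `p_{2,n} = γ₂ δ_{n,0}`, then necessarily `p_{1,0} = 0` and `p_{1,1} = 0` (so the recursion
at `k = 1` is inconsistent with `p_{1,n} = δ_{n,0}`), and the first possibly non-vanishing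
coefficient for `a₁` is `p_{1,2} = 2G_{3,-2} p_{3,0} p_{2,0}`. -/
theorem stmt_19
    (γ : ℤ → ℝ) (p : ℕ → ℕ → ℝ)
    (hrec : ∀ k : ℕ, 1 ≤ k → ∀ n : ℕ,
      p k n = (∑ j ∈ Finset.Ico 1 k, ∑ l ∈ Finset.range (n + 1),
          Gc γ ((k : ℤ) - (j : ℤ)) (j : ℤ) * p (k - j) l * p j (n - l))
        + 2 * ∑ j ∈ Finset.Icc 1 n, ∑ l ∈ Finset.range (n - j + 1),
            Gc γ ((k : ℤ) + (j : ℤ)) (-(j : ℤ)) * p (k + j) l * p j (n - (j + l)))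
    (hp2 : ∀ n : ℕ, p 2 n = γ 2 * (if n = 0 then 1 else 0)) :
    p 1 0 = 0 ∧ p 1 1 = 0 ∧ p 1 2 = 2 * Gc γ 3 (-2) * p 3 0 * p 2 0 := by
  have h0 : p 1 0 = 0 := by
    have := hrec 1 le_rfl 0
    simpa using this
  have h1 : p 1 1 = 0 := by
    have := hrec 1 le_rfl 1
    simp [Finset.sum_range_succ, h0] at this
    simpa using this
  refine ⟨h0, h1, ?_⟩
  have := hrec 1 le_rfl 2
  have hIcc : Finset.Icc 1 2 = {1, 2} := by decide
  simp [hIcc, Finset.sum_range_succ, h0, h1, hp2] at this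
  rw [this, show p 2 0 = γ 2 by simpa using hp2 0]; ring
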